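/- For every m ≥ 1, every y ∈ ℝ^m, and every u with 0 ≤ u < 1, the sum over all multi-indices a ∈ ℕ^m of He_a(y)²·u^{a₁+⋯+a_m} / (a₁!·a₂!⋯a_m!) converges and equals (1 − u²)^{−m/2} · exp(u·‖y‖₂² / (1 + u)). -/

import Mathlib

open scoped BigOperators

/-- Probabilists' Hermite polynomials: `He 0 = 1`, `He 1 = id`,
`He (a+1) x = x * He a x - a * He (a-1) x`. -/
noncomputable def He : ℕ → ℝ → ℝ
  | 0, _ => 1
  | 1, x => x
  | (n + 2), x => x * He (n + 1) x - ((n : ℝ) + 1) * He n x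

open MeasureTheory Complex Filter Real Set Topology

noncomputable def Iq (x : ℝ) (n : ℕ) : ℂ :=
  ∫ t : ℝ, ((x : ℂ) + t * Complex.I) ^ n * Complex.exp (-(t:ℂ)^2/2)

lemma norm_cexp_neg_sq (t : ℝ) : ‖Complex.exp (-(t:ℂ)^2/2)‖ = Real.exp (-t^2/2) := by
  rw [show (-(t:ℂ)^2/2) = ((-t^2/2 : ℝ) : ℂ) by push_cast; ring,
    Complex.norm_exp_ofReal]

lemma pow_le_fact_exp {r : ℝ} (hr : 0 ≤ r) (n : ℕ) : r ^ n ≤ n.factorial * Real.exp r := by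
  have h1 : r ^ n / (n.factorial:ℝ) ≤ ∑ i ∈ Finset.range (n+1), r ^ i / (i.factorial:ℝ) :=
    Finset.single_le_sum (f := fun i => r ^ i / (i.factorial : ℝ))
      (fun i _ => by positivity) (Finset.self_mem_range_succ n)
  have h2 := Real.sum_le_exp_of_nonneg hr (n+1)
  have h3 : (0:ℝ) < n.factorial := by positivity
  have := h1.trans h2
  rw [div_le_iff₀ h3] at this
  linarith [this]

lemma norm_aux (x : ℝ) (n k : ℕ) (t : ℝ) :
    ‖(t:ℂ)^k * ((x : ℂ) + t * Complex.I) ^ n * Complex.exp (-(t:ℂ)^2/2)‖ ≤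
      ((n+k).factorial * Real.exp (|x| + 1)) * Real.exp (-(1/4) * t^2) := by
  have hb : ‖(t:ℂ)^k * ((x : ℂ) + t * Complex.I) ^ n‖ ≤ (|x| + |t|) ^ (n + k) := by
    rw [norm_mul, norm_pow, norm_pow]
    have h1 : ‖(t:ℂ)‖ ≤ |x| + |t| := by
      rw [Complex.norm_real]; simp [abs_nonneg, le_add_iff_nonneg_left, abs_nonneg x]
    have h2 : ‖(x : ℂ) + t * Complex.I‖ ≤ |x| + |t| := by
      refine (norm_add_le _ _).trans ?_
      simp [Complex.norm_real]
    calc ‖(t:ℂ)‖^k * ‖(x:ℂ) + t*Complex.I‖^n ≤ (|x|+|t|)^k * (|x|+|t|)^n := by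
          gcongr <;> positivity
      _ = (|x|+|t|)^(n+k) := by ring
  have hc : (|x| + |t|) ^ (n+k) ≤ (n+k).factorial * Real.exp (|x| + |t|) :=
    pow_le_fact_exp (by positivity) _
  rw [norm_mul, norm_cexp_neg_sq]
  calc ‖(t:ℂ)^k * ((x : ℂ) + t * Complex.I) ^ n‖ * Real.exp (-t^2/2)
      ≤ ((n+k).factorial * Real.exp (|x| + |t|)) * Real.exp (-t^2/2) := by
        apply mul_le_mul_of_nonneg_right (hb.trans hc) (Real.exp_nonneg _)
    _ ≤ ((n+k).factorial * Real.exp (|x| + 1)) * Real.exp (-(1/4) * t^2) := by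
        rw [mul_assoc, mul_assoc, ← Real.exp_add, ← Real.exp_add]
        have : |x| + |t| + -t^2/2 ≤ |x| + 1 + -(1/4) * t^2 := by
          nlinarith [sq_nonneg (|t| - 2), _root_.sq_abs t]
        exact mul_le_mul_of_nonneg_left (Real.exp_le_exp.2 this) (by positivity)

lemma integrable_aux (x : ℝ) (n k : ℕ) :
    Integrable (fun t : ℝ => (t:ℂ)^k * ((x : ℂ) + t * Complex.I) ^ n * Complex.exp (-(t:ℂ)^2/2)) := by
  have hmeas : AEStronglyMeasurable
      (fun t : ℝ => (t:ℂ)^k * ((x : ℂ) + t * Complex.I) ^ n * Complex.exp (-(t:ℂ)^2/2)) volume := by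
    apply Continuous.aestronglyMeasurable
    continuity
  refine Integrable.mono' (((integrable_exp_neg_mul_sq (by norm_num : (0:ℝ) < 1/4)).const_mul
    ((n+k).factorial * Real.exp (|x| + 1)))) hmeas ?_
  filter_upwards with t
  simpa [mul_assoc] using norm_aux x n k t

section part2
variable (x : ℝ)

lemma tendsto_exp_quarter (l : Filter ℝ) (h : Tendsto (fun t : ℝ => |t|) l atTop) :
    Tendsto (fun t : ℝ => Real.exp (-(1/4) * t^2)) l (𝓝 0) := by
  have h2 : Tendsto (fun t : ℝ => (1/4) * |t|^2) l atTop :=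
    Tendsto.const_mul_atTop (by norm_num) ((tendsto_pow_atTop two_ne_zero).comp h)
  have h3 := tendsto_inv_atTop_zero.comp (Real.tendsto_exp_atTop.comp h2)
  refine h3.congr fun t => ?_
  simp only [Function.comp_apply, ← Real.exp_neg, _root_.sq_abs]
  ring_nf

lemma tendsto_zero_of_norm_bound (F : ℝ → ℂ) (C : ℝ)
    (hb : ∀ t, ‖F t‖ ≤ C * Real.exp (-(1/4) * t^2)) (l : Filter ℝ)
    (h : Tendsto (fun t : ℝ => |t|) l atTop) : Tendsto F l (𝓝 0) := by
  have := (tendsto_exp_quarter l h).const_mul C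
  rw [mul_zero] at this
  exact squeeze_zero_norm hb this

lemma integral_deriv_eq_zero (F F' : ℝ → ℂ) (hF : ∀ t, HasDerivAt F (F' t) t)
    (hint : Integrable F')
    (htop : Tendsto F atTop (𝓝 0)) (hbot : Tendsto F atBot (𝓝 0)) :
    ∫ t : ℝ, F' t = 0 := by
  rw [← intervalIntegral.integral_Iic_add_Ioi (b := (0:ℝ)) hint.integrableOn hint.integrableOn,
    integral_Ioi_of_hasDerivAt_of_tendsto' (fun t _ => hF t) hint.integrableOn htop,
    integral_Iic_of_hasDerivAt_of_tendsto' (fun t _ => hF t) hint.integrableOn hbot]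
  ring

lemma hasDerivAt_main (n : ℕ) (t : ℝ) :
    HasDerivAt (fun s : ℝ => ((x:ℂ) + s * Complex.I)^(n+1) * Complex.exp (-(s:ℂ)^2/2))
      ((((n:ℂ)+1) * Complex.I) * (((x:ℂ) + t * Complex.I)^n * Complex.exp (-(t:ℂ)^2/2))
        - (t:ℂ) * (((x:ℂ) + t * Complex.I)^(n+1) * Complex.exp (-(t:ℂ)^2/2))) t := by
  have h1 : HasDerivAt (fun z : ℂ => (x:ℂ) + z * Complex.I) Complex.I (t:ℂ) := by
    simpa using ((hasDerivAt_id ((t:ℝ):ℂ)).mul_const Complex.I).const_add (x:ℂ)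
  have h2 := h1.pow (n+1)
  have h3 : HasDerivAt (fun z : ℂ => -z^2/2) (-(t:ℂ)) (t:ℂ) := by
    exact ((hasDerivAt_pow 2 ((t:ℝ):ℂ)).neg.div_const 2).congr_deriv (by simp; ring)
  have h4 := h3.cexp
  have h5 := h2.mul h4
  have h6 := h5.comp_ofReal
  exact h6.congr_deriv (by simp only [Pi.pow_apply, Nat.add_sub_cancel]; push_cast; ring)

lemma J_eq (n : ℕ) :
    ∫ t : ℝ, (t:ℂ) * (((x:ℂ) + t * Complex.I)^(n+1) * Complex.exp (-(t:ℂ)^2/2))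
      = ((n:ℂ)+1) * Complex.I * ∫ t : ℝ, ((x:ℂ) + t * Complex.I)^n * Complex.exp (-(t:ℂ)^2/2) := by
  have hint : Integrable (fun t : ℝ =>
      (((n:ℂ)+1) * Complex.I) * (((x:ℂ) + t * Complex.I)^n * Complex.exp (-(t:ℂ)^2/2))
        - (t:ℂ) * (((x:ℂ) + t * Complex.I)^(n+1) * Complex.exp (-(t:ℂ)^2/2))) := by
    have i1 := (integrable_aux x n 0).const_mul (((n:ℂ)+1) * Complex.I)
    have i2 := integrable_aux x (n+1) 1
    simpa [mul_assoc, mul_comm, mul_left_comm, pow_succ, Pi.sub_def] using i1.sub i2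
  have h0 := integral_deriv_eq_zero _ _ (hasDerivAt_main x n) hint
    (tendsto_zero_of_norm_bound _ ((n+1).factorial * Real.exp (|x| + 1))
      (fun t => by simpa using norm_aux x (n+1) 0 t) _ tendsto_abs_atTop_atTop)
    (tendsto_zero_of_norm_bound _ ((n+1).factorial * Real.exp (|x| + 1))
      (fun t => by simpa using norm_aux x (n+1) 0 t) _ tendsto_abs_atBot_atTop)
  have i1 := (integrable_aux x n 0).const_mul (((n:ℂ)+1) * Complex.I)
  have i2 : Integrable (fun t : ℝ =>
      (t:ℂ) * (((x:ℂ) + t * Complex.I)^(n+1) * Complex.exp (-(t:ℂ)^2/2))) := by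
    simpa [mul_assoc, pow_one] using integrable_aux x (n+1) 1
  rw [integral_sub (by simpa [mul_assoc, pow_zero, one_mul] using i1) i2, sub_eq_zero] at h0
  rw [← h0, integral_const_mul]

end part2

lemma gauss_int : ∫ t : ℝ, Complex.exp (-(t:ℂ)^2/2) = ((Real.sqrt (2*π) : ℝ) : ℂ) := by
  have hb : (0:ℝ) < ((1:ℂ)/2).re := by norm_num
  have h := integral_gaussian_complex hb
  have h2 : ∀ t : ℝ, Complex.exp (-(1/2 : ℂ) * (t:ℂ)^2) = Complex.exp (-(t:ℂ)^2/2) := by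
    intro t; ring_nf
  rw [funext h2] at h
  rw [h]
  have : ((π : ℂ) / (1/2)) = ((2*π : ℝ) : ℂ) := by push_cast; ring
  rw [this, show ((1:ℂ)/2) = (((1/2 : ℝ)):ℂ) by norm_num, ← Complex.ofReal_cpow (by positivity)]
  rw [Real.sqrt_eq_rpow]

lemma Iq_zero (x : ℝ) : Iq x 0 = ((Real.sqrt (2*π) : ℝ) : ℂ) := by
  simp only [Iq, pow_zero, one_mul]
  exact gauss_int

lemma J_zero : ∫ t : ℝ, (t:ℂ) * Complex.exp (-(t:ℂ)^2/2) = 0 := by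
  have hd : ∀ t : ℝ, HasDerivAt (fun s : ℝ => -Complex.exp (-(s:ℂ)^2/2))
      ((t:ℂ) * Complex.exp (-(t:ℂ)^2/2)) t := by
    intro t
    have h3 : HasDerivAt (fun z : ℂ => -z^2/2) (-(t:ℂ)) (t:ℂ) := by
      exact ((hasDerivAt_pow 2 ((t:ℝ):ℂ)).neg.div_const 2).congr_deriv (by simp; ring)
    have h4 := (h3.cexp).neg.comp_ofReal
    exact h4.congr_deriv (by ring)
  have hint : Integrable (fun t : ℝ => (t:ℂ) * Complex.exp (-(t:ℂ)^2/2)) := by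
    simpa using integrable_aux 0 0 1
  refine integral_deriv_eq_zero _ _ hd hint ?_ ?_
  · refine tendsto_zero_of_norm_bound _ 1 (fun t => ?_) _ tendsto_abs_atTop_atTop
    rw [norm_neg, norm_cexp_neg_sq, one_mul]
    apply Real.exp_le_exp.2; nlinarith [sq_nonneg t]
  · refine tendsto_zero_of_norm_bound _ 1 (fun t => ?_) _ tendsto_abs_atBot_atTop
    rw [norm_neg, norm_cexp_neg_sq, one_mul]
    apply Real.exp_le_exp.2; nlinarith [sq_nonneg t]

lemma Iq_split (x : ℝ) (n : ℕ) : Iq x (n+1) =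
    (x:ℂ) * Iq x n + Complex.I * ∫ t : ℝ, (t:ℂ) * (((x:ℂ) + t * Complex.I)^n * Complex.exp (-(t:ℂ)^2/2)) := by
  have h : ∀ t : ℝ, ((x:ℂ) + t * Complex.I)^(n+1) * Complex.exp (-(t:ℂ)^2/2)
      = (x:ℂ) * (((x:ℂ) + t * Complex.I)^n * Complex.exp (-(t:ℂ)^2/2))
        + Complex.I * ((t:ℂ) * (((x:ℂ) + t * Complex.I)^n * Complex.exp (-(t:ℂ)^2/2))) := by
    intro t; rw [pow_succ]; ring
  have i1 : Integrable (fun t : ℝ => ((x:ℂ) + t * Complex.I)^n * Complex.exp (-(t:ℂ)^2/2)) := by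
    simpa using integrable_aux x n 0
  have i2 : Integrable (fun t : ℝ => (t:ℂ) * (((x:ℂ) + t * Complex.I)^n * Complex.exp (-(t:ℂ)^2/2))) := by
    simpa [mul_assoc] using integrable_aux x n 1
  rw [Iq, funext h, integral_add (i1.const_mul _) (i2.const_mul _),
    integral_const_mul, integral_const_mul, Iq]

lemma Iq_one (x : ℝ) : Iq x 1 = ((Real.sqrt (2*π) : ℝ) : ℂ) * (x:ℂ) := by
  rw [Iq_split x 0]
  simp only [pow_zero, one_mul]
  rw [J_zero, Iq_zero]
  ring

lemma Iq_rec (x : ℝ) (n : ℕ) :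
    Iq x (n+2) = (x:ℂ) * Iq x (n+1) - ((n:ℂ)+1) * Iq x n := by
  rw [Iq_split x (n+1), J_eq x n]
  have : Complex.I * (((n:ℂ)+1) * Complex.I * Iq x n) = -((n:ℂ)+1) * Iq x n := by
    rw [show Complex.I * (((n:ℂ)+1) * Complex.I * Iq x n)
        = (Complex.I * Complex.I) * (((n:ℂ)+1) * Iq x n) by ring, Complex.I_mul_I]
    ring
  rw [Iq, Iq] at *
  rw [this]; ring

lemma Iq_eq_He (x : ℝ) : ∀ n, Iq x n = ((Real.sqrt (2*π) : ℝ) : ℂ) * ((He n x : ℝ) : ℂ)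
  | 0 => by simp [Iq_zero, He]
  | 1 => by simp [Iq_one, He]
  | (n+2) => by
      rw [Iq_rec, Iq_eq_He x (n+1), Iq_eq_He x n, show He (n+2) x = x * He (n+1) x - ((n:ℝ)+1) * He n x from rfl]
      push_cast
      ring

section univariate
variable (x u : ℝ)

lemma norm_w_mul_w_le (s t : ℝ) :
    ‖((x:ℂ) + s * Complex.I)‖ * ‖((x:ℂ) + t * Complex.I)‖ ≤ x^2 + (s^2 + t^2)/2 := by
  have hs : ‖((x:ℂ) + s * Complex.I)‖^2 = x^2 + s^2 := by
    rw [← Complex.normSq_eq_norm_sq]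
    simp [Complex.normSq_apply]; ring
  have ht : ‖((x:ℂ) + t * Complex.I)‖^2 = x^2 + t^2 := by
    rw [← Complex.normSq_eq_norm_sq]
    simp [Complex.normSq_apply]; ring
  nlinarith [sq_nonneg (‖((x:ℂ) + s * Complex.I)‖ - ‖((x:ℂ) + t * Complex.I)‖),
    norm_nonneg ((x:ℂ) + s * Complex.I), norm_nonneg ((x:ℂ) + t * Complex.I)]

lemma mehler_hasSum_complex (hu0 : 0 ≤ u) (hu1 : u < 1) :
    HasSum (fun n : ℕ => Iq x n ^ 2 * ((u:ℂ) ^ n / (n.factorial : ℂ)))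
      (∫ p : ℝ × ℝ, Complex.exp ((u:ℂ) * (((x:ℂ) + p.1 * Complex.I) * ((x:ℂ) + p.2 * Complex.I))
        - (p.1:ℂ)^2/2 - (p.2:ℂ)^2/2)) := by
  set w : ℝ → ℂ := fun t => (x:ℂ) + t * Complex.I with hw
  set E : ℝ → ℂ := fun t => Complex.exp (-(t:ℂ)^2/2) with hE
  set F : ℕ → ℝ × ℝ → ℂ := fun n p => (w p.1 ^ n * E p.1) * (w p.2 ^ n * E p.2)
    * ((u:ℂ) ^ n / (n.factorial : ℂ)) with hF
  have hFint : ∀ n, ∫ p : ℝ × ℝ, F n p = Iq x n ^ 2 * ((u:ℂ) ^ n / (n.factorial : ℂ)) := by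
    intro n
    rw [show (volume : Measure (ℝ × ℝ)) = (volume : Measure ℝ).prod (volume : Measure ℝ) from
        MeasureTheory.Measure.volume_eq_prod ℝ ℝ]
    rw [MeasureTheory.integral_mul_const, integral_prod_mul (fun s => w s ^ n * E s)
      (fun t => w t ^ n * E t)]
    rw [Iq]
    change _ = (∫ t : ℝ, w t ^ n * E t) ^ 2 * _
    ring_nf
  have key : HasSum (fun n => ∫ p : ℝ × ℝ, F n p)
      (∫ p : ℝ × ℝ, Complex.exp ((u:ℂ) * (w p.1 * w p.2) - (p.1:ℂ)^2/2 - (p.2:ℂ)^2/2)) := by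
    apply MeasureTheory.hasSum_integral_of_dominated_convergence
      (bound := fun n p => (u * (x^2 + (p.1^2 + p.2^2)/2))^n / (n.factorial : ℝ)
        * Real.exp (-(p.1^2 + p.2^2)/2))
    · intro n
      apply Continuous.aestronglyMeasurable
      apply Continuous.mul _ continuous_const
      apply Continuous.mul
      · exact ((Continuous.pow (by continuity) n).mul (by continuity))
      · exact ((Continuous.pow (by continuity) n).mul (by continuity))
    · intro n
      filter_upwards with p
      have h1 : ‖F n p‖ = (‖w p.1‖ * ‖w p.2‖)^n * (Real.exp (-p.1^2/2) * Real.exp (-p.2^2/2))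
          * (u^n / (n.factorial : ℝ)) := by
        simp only [hF, norm_mul, norm_pow, norm_div]
        rw [norm_cexp_neg_sq, norm_cexp_neg_sq]
        have h2 : ‖(u:ℂ)‖ = u := by rw [Complex.norm_real]; exact _root_.abs_of_nonneg hu0
        have h3 : ‖((n.factorial : ℕ) : ℂ)‖ = (n.factorial : ℝ) := by
          rw [Complex.norm_natCast]
        rw [h2, h3]
        ring
      rw [h1]
      have h4 : ‖w p.1‖^n * ‖w p.2‖^n ≤ (x^2 + (p.1^2 + p.2^2)/2)^n := by
        rw [← mul_pow]
        exact pow_le_pow_left₀ (by positivity) (norm_w_mul_w_le x p.1 p.2) n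
      have h5 : Real.exp (-p.1^2/2) * Real.exp (-p.2^2/2) = Real.exp (-(p.1^2+p.2^2)/2) := by
        rw [← Real.exp_add]; ring_nf
      rw [h5]
      have h1' : (‖w p.1‖ * ‖w p.2‖)^n = ‖w p.1‖^n * ‖w p.2‖^n := mul_pow _ _ _
      rw [h1']
      calc ‖w p.1‖^n * ‖w p.2‖^n * Real.exp (-(p.1^2+p.2^2)/2) * (u^n / (n.factorial:ℝ))
          ≤ (x^2 + (p.1^2 + p.2^2)/2)^n * Real.exp (-(p.1^2+p.2^2)/2) * (u^n / (n.factorial:ℝ)) := by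
            gcongr
        _ = (u * (x^2 + (p.1^2 + p.2^2)/2))^n / (n.factorial:ℝ) * Real.exp (-(p.1^2+p.2^2)/2) := by
            rw [mul_pow]; ring
    · filter_upwards with p
      exact ((Real.summable_pow_div_factorial _).mul_right _)
    · have heq : (fun p : ℝ × ℝ => ∑' n, (u * (x^2 + (p.1^2 + p.2^2)/2))^n / (n.factorial : ℝ)
          * Real.exp (-(p.1^2 + p.2^2)/2))
          = fun p : ℝ × ℝ => Real.exp (u*x^2) * (Real.exp (-((1-u)/2) * p.1^2)
            * Real.exp (-((1-u)/2) * p.2^2)) := by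
        funext p
        rw [tsum_mul_right]
        have : ∑' n, (u * (x^2 + (p.1^2 + p.2^2)/2))^n / (n.factorial : ℝ)
            = Real.exp (u * (x^2 + (p.1^2 + p.2^2)/2)) := by
          rw [Real.exp_eq_exp_ℝ, NormedSpace.exp_eq_tsum_div]
        rw [this, ← Real.exp_add, ← Real.exp_add, ← Real.exp_add]
        ring_nf
      rw [heq]
      have h7 : (0:ℝ) < (1-u)/2 := by linarith
      rw [show (volume : Measure (ℝ × ℝ)) = (volume : Measure ℝ).prod (volume : Measure ℝ) from
        MeasureTheory.Measure.volume_eq_prod ℝ ℝ]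
      exact ((integrable_exp_neg_mul_sq h7).mul_prod (integrable_exp_neg_mul_sq h7)).const_mul _
    · filter_upwards with p
      have hz : ∀ n : ℕ, F n p = ((u:ℂ) * (w p.1 * w p.2))^n / (n.factorial : ℂ)
          * (E p.1 * E p.2) := by
        intro n
        simp only [hF, mul_pow]
        ring
      have h8 : HasSum (fun n : ℕ => ((u:ℂ) * (w p.1 * w p.2))^n / (n.factorial : ℂ))
          (Complex.exp ((u:ℂ) * (w p.1 * w p.2))) := by
        rw [Complex.exp_eq_exp_ℂ]
        exact NormedSpace.expSeries_div_hasSum_exp _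
      have h9 := h8.mul_right (E p.1 * E p.2)
      have h10 : Complex.exp ((u:ℂ) * (w p.1 * w p.2)) * (E p.1 * E p.2)
          = Complex.exp ((u:ℂ) * (w p.1 * w p.2) - (p.1:ℂ)^2/2 - (p.2:ℂ)^2/2) := by
        simp only [hE, ← Complex.exp_add]
        ring_nf
      rw [funext hz, ← h10]
      exact h9
  have := key
  rw [funext hFint] at this
  exact this

end univariate

section integralvalue
variable (x u : ℝ)

lemma mehler_integral_value (hu0 : 0 ≤ u) (hu1 : u < 1) :
    (∫ p : ℝ × ℝ, Complex.exp ((u:ℂ) * (((x:ℂ) + p.1 * Complex.I) * ((x:ℂ) + p.2 * Complex.I))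
        - (p.1:ℂ)^2/2 - (p.2:ℂ)^2/2))
    = ((2*π/Real.sqrt (1 - u^2) * Real.exp (u*x^2/(1+u)) : ℝ) : ℂ) := by
  have hu2 : u^2 < 1 := by nlinarith
  have h1u2 : (0:ℝ) < 1 - u^2 := by linarith
  have h1u : (1+u) ≠ 0 := by nlinarith
  -- integrability of the integrand on ℝ × ℝ
  have hnorm : ∀ p : ℝ × ℝ, ‖Complex.exp ((u:ℂ) * (((x:ℂ) + p.1 * Complex.I) * ((x:ℂ) + p.2 * Complex.I))
      - (p.1:ℂ)^2/2 - (p.2:ℂ)^2/2)‖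
      ≤ Real.exp (u*x^2) * (Real.exp (-((1-u)/2) * p.1^2) * Real.exp (-((1-u)/2) * p.2^2)) := by
    intro p
    have hA : ((u:ℂ) * (((x:ℂ) + p.1 * Complex.I) * ((x:ℂ) + p.2 * Complex.I))
        - (p.1:ℂ)^2/2 - (p.2:ℂ)^2/2)
        = ((u*(x^2 - p.1*p.2) - p.1^2/2 - p.2^2/2 : ℝ) : ℂ) + ((u*x*(p.1+p.2) : ℝ) : ℂ) * Complex.I := by
      push_cast
      ring_nf
      rw [Complex.I_sq]
      ring
    rw [hA, Complex.norm_exp]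
    simp only [Complex.add_re, Complex.ofReal_re, Complex.mul_re, Complex.I_re, Complex.I_im,
      Complex.ofReal_im, mul_zero, zero_mul, mul_one, sub_zero, zero_sub]
    rw [← Real.exp_add, ← Real.exp_add]
    apply Real.exp_le_exp.2
    nlinarith [sq_nonneg (p.1 + p.2), sq_nonneg (p.1 - p.2)]
  have hintbound : Integrable (fun p : ℝ × ℝ => Real.exp (u*x^2)
      * (Real.exp (-((1-u)/2) * p.1^2) * Real.exp (-((1-u)/2) * p.2^2))) := by
    have h7 : (0:ℝ) < (1-u)/2 := by linarith
    rw [show (volume : Measure (ℝ × ℝ)) = (volume : Measure ℝ).prod (volume : Measure ℝ) from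
      MeasureTheory.Measure.volume_eq_prod ℝ ℝ]
    exact ((integrable_exp_neg_mul_sq h7).mul_prod (integrable_exp_neg_mul_sq h7)).const_mul _
  have hint : Integrable (fun p : ℝ × ℝ =>
      Complex.exp ((u:ℂ) * (((x:ℂ) + p.1 * Complex.I) * ((x:ℂ) + p.2 * Complex.I))
        - (p.1:ℂ)^2/2 - (p.2:ℂ)^2/2)) := by
    refine hintbound.mono' ?_ (Eventually.of_forall hnorm)
    apply Continuous.aestronglyMeasurable
    apply Continuous.cexp
    continuity
  rw [show (volume : Measure (ℝ × ℝ)) = (volume : Measure ℝ).prod (volume : Measure ℝ) from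
      MeasureTheory.Measure.volume_eq_prod ℝ ℝ] at hint ⊢
  rw [MeasureTheory.integral_prod _ hint]
  -- inner integral
  have hb : (((-1/2 : ℝ) : ℂ)).re < 0 := by
    rw [Complex.ofReal_re]; norm_num
  have e1 : ∀ s t : ℝ, ((u:ℂ) * (((x:ℂ) + s * Complex.I) * ((x:ℂ) + t * Complex.I))
      - (s:ℂ)^2/2 - (t:ℂ)^2/2)
      = ((-1/2 : ℝ) : ℂ) * (t:ℂ)^2 + ((u:ℂ) * ((x:ℂ) + s * Complex.I) * Complex.I) * (t:ℂ)
        + ((u:ℂ)*(x:ℂ)*((x:ℂ) + s * Complex.I) - (s:ℂ)^2/2) := by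
    intro s t
    push_cast
    ring
  have hinner : ∀ s : ℝ, (∫ t : ℝ, Complex.exp ((u:ℂ) * (((x:ℂ) + s * Complex.I) * ((x:ℂ) + t * Complex.I))
      - (s:ℂ)^2/2 - (t:ℂ)^2/2))
      = ((π:ℂ) / -((-1/2 : ℝ) : ℂ)) ^ (1/2 : ℂ)
        * Complex.exp (((u:ℂ)*(x:ℂ)*((x:ℂ) + s * Complex.I) - (s:ℂ)^2/2)
          - ((u:ℂ) * ((x:ℂ) + s * Complex.I) * Complex.I)^2 / (4 * ((-1/2 : ℝ) : ℂ))) := by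
    intro s
    rw [show (fun t : ℝ => Complex.exp ((u:ℂ) * (((x:ℂ) + s * Complex.I) * ((x:ℂ) + t * Complex.I))
      - (s:ℂ)^2/2 - (t:ℂ)^2/2)) = fun t : ℝ => Complex.exp (((-1/2 : ℝ) : ℂ) * (t:ℂ)^2
        + ((u:ℂ) * ((x:ℂ) + s * Complex.I) * Complex.I) * (t:ℂ)
        + ((u:ℂ)*(x:ℂ)*((x:ℂ) + s * Complex.I) - (s:ℂ)^2/2)) from funext (fun t => congrArg Complex.exp (e1 s t))]
    exact integral_cexp_quadratic hb _ _
  simp only [hinner]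
  rw [MeasureTheory.integral_const_mul]
  -- rewrite the exponent of the outer integrand into quadratic form
  have e2 : ∀ s : ℝ, (((u:ℂ)*(x:ℂ)*((x:ℂ) + s * Complex.I) - (s:ℂ)^2/2)
      - ((u:ℂ) * ((x:ℂ) + s * Complex.I) * Complex.I)^2 / (4 * ((-1/2 : ℝ) : ℂ)))
      = (((u^2-1)/2 : ℝ) : ℂ) * (s:ℂ)^2 + (((u*x*(1-u) : ℝ) : ℂ) * Complex.I) * (s:ℂ)
        + ((u*x^2 - u^2*x^2/2 : ℝ) : ℂ) := by
    intro s
    push_cast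
    linear_combination ((u:ℂ)^2*(x:ℂ)^2/2 + (u:ℂ)^2*(x:ℂ)*(s:ℂ)*Complex.I
      + (u:ℂ)^2*(s:ℂ)^2*(Complex.I^2-1)/2) * Complex.I_sq
  simp only [e2]
  have hb' : ((((u^2-1)/2 : ℝ) : ℂ)).re < 0 := by
    rw [Complex.ofReal_re]; nlinarith
  rw [integral_cexp_quadratic hb' _ _]
  -- final simplification
  have hreal : (u*x^2 - u^2*x^2/2) + (u*x*(1-u))^2/(2*(u^2-1)) = u*x^2/(1+u) := by
    have hne : (u^2 - 1 : ℝ) ≠ 0 := by nlinarith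
    field_simp
    ring
  have hL : (((u*x^2 - u^2*x^2/2 : ℝ) : ℂ)
      - ((((u*x*(1-u) : ℝ) : ℂ) * Complex.I))^2 / (4 * (((u^2-1)/2 : ℝ) : ℂ)))
      = ((u*x^2/(1+u) : ℝ) : ℂ) := by
    have hbig : (((u*x^2 - u^2*x^2/2 : ℝ) : ℂ)
        - ((((u*x*(1-u) : ℝ) : ℂ) * Complex.I))^2 / (4 * (((u^2-1)/2 : ℝ) : ℂ)))
        = ((u*x^2 - u^2*x^2/2 + (u*x*(1-u))^2/(2*(u^2-1)) : ℝ) : ℂ) := by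
      push_cast
      linear_combination (-((u:ℂ)*(x:ℂ)*(1-(u:ℂ)))^2/(2*((u:ℂ)^2-1))) * Complex.I_sq
    rw [hbig]
    exact congrArg Complex.ofReal hreal
  rw [hL]
  have hA1 : ((π:ℂ) / -((-1/2 : ℝ) : ℂ)) = ((2*π : ℝ):ℂ) := by push_cast; ring
  have hA2 : ((π:ℂ) / -(((u^2-1)/2 : ℝ) : ℂ)) = (((2*π/(1-u^2)) : ℝ):ℂ) := by
    have hne2 : ((1 - u^2 : ℝ) : ℂ) ≠ 0 := by
      rw [Ne, Complex.ofReal_eq_zero]; nlinarith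
    push_cast at hne2 ⊢
    have hne3 : (-1 + (u:ℂ)^2) ≠ 0 := by intro h; apply hne2; linear_combination -h
    field_simp
    linear_combination mul_inv_cancel₀ hne3
  have hP1 : ((2*π : ℝ):ℂ) ^ (1/2 : ℂ) = ((Real.sqrt (2*π) : ℝ) : ℂ) := by
    rw [show (1/2 : ℂ) = ((1/2 : ℝ) : ℂ) by norm_num, ← Complex.ofReal_cpow (by positivity),
      ← Real.sqrt_eq_rpow]
  have hP2 : (((2*π/(1-u^2)) : ℝ):ℂ) ^ (1/2 : ℂ) = ((Real.sqrt (2*π/(1-u^2)) : ℝ) : ℂ) := by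
    rw [show (1/2 : ℂ) = ((1/2 : ℝ) : ℂ) by norm_num,
      ← Complex.ofReal_cpow (le_of_lt (div_pos (by positivity) h1u2)), ← Real.sqrt_eq_rpow]
  rw [hA1, hA2, hP1, hP2, ← Complex.ofReal_exp, ← Complex.ofReal_mul, ← Complex.ofReal_mul]
  norm_cast
  have hs : Real.sqrt (2*π) * Real.sqrt (2*π/(1-u^2)) = 2*π/Real.sqrt (1-u^2) := by
    rw [← Real.sqrt_mul (by positivity)]
    rw [show (2*π)*(2*π/(1-u^2)) = (2*π/Real.sqrt (1-u^2))^2 by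
      rw [div_pow, Real.sq_sqrt h1u2.le]; ring]
    exact Real.sqrt_sq (by positivity)
  rw [← mul_assoc, hs]
end integralvalue

lemma mehler_one (x u : ℝ) (hu0 : 0 ≤ u) (hu1 : u < 1) :
    HasSum (fun n : ℕ => He n x ^ 2 * u ^ n / (n.factorial : ℝ))
      ((1 - u^2) ^ (-(1:ℝ)/2) * Real.exp (u * x^2 / (1+u))) := by
  have hu2 : u^2 < 1 := by nlinarith
  have h1u2 : (0:ℝ) < 1 - u^2 := by linarith
  have h := mehler_hasSum_complex x u hu0 hu1
  rw [mehler_integral_value x u hu0 hu1] at h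
  have hterm : (fun n : ℕ => Iq x n ^ 2 * ((u:ℂ) ^ n / (n.factorial : ℂ)))
      = fun n : ℕ => ((2*π * (He n x ^ 2 * u ^ n / (n.factorial : ℝ)) : ℝ) : ℂ) := by
    funext n
    rw [Iq_eq_He x n]
    have h2π : ((Real.sqrt (2*π) : ℝ):ℂ)^2 = ((2*π:ℝ):ℂ) := by
      rw [← Complex.ofReal_pow, Real.sq_sqrt (by positivity)]
    rw [show (((Real.sqrt (2*π) : ℝ) : ℂ) * ((He n x : ℝ) : ℂ))^2
        = ((Real.sqrt (2*π) : ℝ):ℂ)^2 * ((He n x : ℝ) : ℂ)^2 from by ring, h2π]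
    push_cast
    ring
  rw [hterm] at h
  have h2 := Complex.hasSum_ofReal.mp h
  have h3 := h2.mul_left (2*π)⁻¹
  have hπ : (2*π) ≠ 0 := by positivity
  have heq : (fun n : ℕ => (2*π)⁻¹ * (2*π * (He n x ^ 2 * u ^ n / (n.factorial : ℝ))))
      = fun n : ℕ => He n x ^ 2 * u ^ n / (n.factorial : ℝ) := by
    funext n; field_simp
  have hsq : Real.sqrt (1-u^2) ≠ 0 := by positivity
  have hright : (2*π)⁻¹ * (2*π/Real.sqrt (1 - u^2) * Real.exp (u*x^2/(1+u)))
      = (1 - u^2) ^ (-(1:ℝ)/2) * Real.exp (u * x^2 / (1+u)) := by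
    rw [show (-(1:ℝ)/2) = -(1/2 : ℝ) by norm_num, Real.rpow_neg h1u2.le,
      ← Real.sqrt_eq_rpow]
    field_simp
  rw [heq, hright] at h3
  exact h3

lemma mehler_multi (u : ℝ) (hu0 : 0 ≤ u) (hu1 : u < 1) :
    ∀ (m : ℕ) (y : Fin m → ℝ),
      HasSum (fun a : Fin m → ℕ =>
          ∏ i, (He (a i) (y i) ^ 2 * u ^ (a i) / (((a i).factorial : ℝ))))
        ((1 - u^2) ^ (-(m:ℝ)/2) * Real.exp (u * (∑ i, (y i)^2) / (1+u))) := by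
  have hu2 : u^2 < 1 := by nlinarith
  have h1u2 : (0:ℝ) < 1 - u^2 := by linarith
  intro m
  induction m with
  | zero =>
    intro y
    have h0 : (fun a : Fin 0 → ℕ =>
        ∏ i, (He (a i) (y i) ^ 2 * u ^ (a i) / (((a i).factorial : ℝ)))) = fun _ => 1 := by
      funext a; simp
    rw [h0]
    have hone : ((1 - u^2) ^ (-((0:ℕ):ℝ)/2) * Real.exp (u * (∑ i : Fin 0, (y i)^2) / (1+u))) = 1 := by
      norm_num
    rw [hone]
    have := hasSum_single (f := fun _ : Fin 0 → ℕ => (1:ℝ)) default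
      (fun b hb => absurd (Subsingleton.elim b default) hb)
    simpa using this
  | succ m ih =>
    intro y
    have h1 := mehler_one (y 0) u hu0 hu1
    have h2 := ih (fun i => y i.succ)
    set g1 : ℕ → ℝ := fun n => He n (y 0) ^ 2 * u ^ n / (n.factorial : ℝ) with hg1
    set g2 : (Fin m → ℕ) → ℝ := fun b =>
      ∏ i, (He (b i) (y i.succ) ^ 2 * u ^ (b i) / (((b i).factorial : ℝ))) with hg2
    have hn1 : Summable fun n => ‖g1 n‖ := by
      refine h1.summable.congr fun n => ?_
      rw [Real.norm_of_nonneg (by positivity)]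
    have hn2 : Summable fun b => ‖g2 b‖ := by
      refine h2.summable.congr fun b => ?_
      rw [Real.norm_of_nonneg (by positivity)]
    have hsum : Summable (fun q : ℕ × (Fin m → ℕ) => g1 q.1 * g2 q.2) :=
      summable_mul_of_summable_norm hn1 hn2
    have htsum : (∑' q : ℕ × (Fin m → ℕ), g1 q.1 * g2 q.2) = (∑' n, g1 n) * (∑' b, g2 b) :=
      (tsum_mul_tsum_of_summable_norm hn1 hn2).symm
    have hprod : HasSum (fun q : ℕ × (Fin m → ℕ) => g1 q.1 * g2 q.2)
        (((1 - u^2) ^ (-(1:ℝ)/2) * Real.exp (u * (y 0)^2 / (1+u)))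
          * ((1 - u^2) ^ (-(m:ℝ)/2) * Real.exp (u * (∑ i : Fin m, (y i.succ)^2) / (1+u)))) := by
      have hh := hsum.hasSum
      rw [htsum, h1.tsum_eq, h2.tsum_eq] at hh
      exact hh
    have he := (Equiv.hasSum_iff ((Fin.consEquiv (fun _ : Fin (m+1) => ℕ)).symm)
      (f := fun q : ℕ × (Fin m → ℕ) => g1 q.1 * g2 q.2)).mpr hprod
    have hshape : ((fun q : ℕ × (Fin m → ℕ) => g1 q.1 * g2 q.2) ∘ ((Fin.consEquiv (fun _ : Fin (m+1) => ℕ)).symm))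
        = fun a : Fin (m+1) → ℕ =>
          ∏ i, (He (a i) (y i) ^ 2 * u ^ (a i) / (((a i).factorial : ℝ))) := by
      funext a
      rw [show ((fun q : ℕ × (Fin m → ℕ) => g1 q.1 * g2 q.2) ∘ ((Fin.consEquiv (fun _ : Fin (m+1) => ℕ)).symm)) a
          = g1 (a 0) * g2 (fun i => a i.succ) from rfl, Fin.prod_univ_succ]
    rw [hshape] at he
    have hrhs : ((1 - u^2) ^ (-(1:ℝ)/2) * Real.exp (u * (y 0)^2 / (1+u)))
        * ((1 - u^2) ^ (-(m:ℝ)/2) * Real.exp (u * (∑ i : Fin m, (y i.succ)^2) / (1+u)))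
        = (1 - u^2) ^ (-((m+1:ℕ):ℝ)/2) * Real.exp (u * (∑ i, (y i)^2) / (1+u)) := by
      rw [show (-((m+1:ℕ):ℝ)/2) = (-(1:ℝ)/2) + (-(m:ℝ)/2) by push_cast; ring,
        Real.rpow_add h1u2, Fin.sum_univ_succ (f := fun i => (y i)^2)]
      rw [show u * ((y 0)^2 + ∑ i : Fin m, (y i.succ)^2) / (1+u)
          = u * (y 0)^2/(1+u) + u * (∑ i : Fin m, (y i.succ)^2)/(1+u) by ring,
        Real.exp_add]
      ring
    rw [hrhs] at he
    exact he

/-- multivariate diagonal Mehler formula. -/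
theorem stmt7 (m : ℕ) (hm : 1 ≤ m) (y : Fin m → ℝ) (u : ℝ) (hu0 : 0 ≤ u) (hu1 : u < 1) :
    HasSum (fun a : Fin m → ℕ =>
        (∏ i, He (a i) (y i)) ^ 2 * u ^ (∑ i, a i) / (∏ i, ((a i).factorial : ℝ)))
      ((1 - u ^ 2) ^ (-(m : ℝ) / 2) * Real.exp (u * (∑ i, (y i) ^ 2) / (1 + u))) := by
  have h := mehler_multi u hu0 hu1 m y
  have hshape : (fun a : Fin m → ℕ =>
      (∏ i, He (a i) (y i)) ^ 2 * u ^ (∑ i, a i) / (∏ i, ((a i).factorial : ℝ)))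
      = fun a : Fin m → ℕ =>
        ∏ i, (He (a i) (y i) ^ 2 * u ^ (a i) / (((a i).factorial : ℝ))) := by
    funext a
    rw [← Finset.prod_pow, ← Finset.prod_pow_eq_pow_sum, ← Finset.prod_mul_distrib,
      ← Finset.prod_div_distrib]
  rw [hshape]
  exact h
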